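/- Let A = C[T_k; τ] be an Ore extension where τ(T_s) = λ T_s for a fixed element T_s ∈ C and some λ ∈ k*. If a ∈ C and aT_kⁿ lies in the two-sided ideal of A generated by T_s for some n ≥ 0, then a lies in the two-sided ideal of C generated by T_s. -/

import Mathlib

/-- `A = C[T; τ]` is an Ore (skew polynomial) extension: `C` is a subalgebra of `A`,
`T ∈ A` satisfies `T * c = τ(c) * T` for `c ∈ C`, and the powers of `T` form a basis
of `A` as a left `C`-module. -/
structure IsOreExtension (k : Type*) [Field k] {A : Type*} [Ring A] [Algebra k A]
    (C : Subalgebra k A) (τ : C ≃ₐ[k] C) (T : A) : Prop where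
  commute : ∀ c : C, T * (c : A) = (τ c : A) * T
  exists_rep : ∀ a : A, ∃ f : ℕ →₀ C, a = f.sum fun i c => (c : A) * T ^ i
  indep : ∀ f : ℕ →₀ C, (f.sum fun i c => (c : A) * T ^ i) = 0 → f = 0

/-- The Claim in the proof of Proposition 5.3 of Goodearl–Launois–Lenagan: if
`A = C[T_k; τ]` with `τ(T_s) = λ T_s` for some fixed `T_s ∈ C` and `λ ∈ k*`, and if
`a ∈ C` satisfies `a T_kⁿ ∈ ⟨T_s⟩_A` for some `n ≥ 0`, then `a ∈ ⟨T_s⟩_C`; here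
`⟨T_s⟩_A` and `⟨T_s⟩_C` denote the two-sided ideals generated by `T_s` in `A` and `C`
respectively. -/
theorem coeff_in_ideal_of_mem_ideal_Ts
    (k : Type*) [Field k] {A : Type*} [Ring A] [Algebra k A]
    (C : Subalgebra k A) (τ : C ≃ₐ[k] C) (Tk : A)
    (hOre : IsOreExtension k C τ Tk)
    (Ts : C) (lam : k) (hlam : lam ≠ 0) (hTs : τ Ts = lam • Ts)
    (a : C) (n : ℕ)
    (h : (a : A) * Tk ^ n ∈ TwoSidedIdeal.span {(Ts : A)}) :
    a ∈ TwoSidedIdeal.span ({Ts} : Set C) := by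
  classical
  set I : TwoSidedIdeal C := TwoSidedIdeal.span ({Ts} : Set C) with hI
  -- `τ` maps `I` into itself
  have hTsI : Ts ∈ I := TwoSidedIdeal.subset_span rfl
  have tauI : ∀ c ∈ I, τ c ∈ I := by
    intro c hc
    have : c ∈ TwoSidedIdeal.comap (τ : C →+* C) I := by
      rw [hI, TwoSidedIdeal.mem_span_iff] at hc
      exact hc _ (by
        intro x hx
        rcases hx with rfl
        rw [SetLike.mem_coe, TwoSidedIdeal.mem_comap]
        show τ x ∈ I
        rw [hTs, Algebra.smul_def]
        exact I.mul_mem_left _ _ hTsI)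
    rwa [TwoSidedIdeal.mem_comap] at this
  have tauIn : ∀ (j : ℕ), ∀ c ∈ I, (⇑τ)^[j] c ∈ I := by
    intro j
    induction j with
    | zero => intro c hc; simpa using hc
    | succ j ih =>
      intro c hc
      rw [Function.iterate_succ_apply']
      exact tauI _ (ih c hc)
  -- `Tk ^ j` commutes with `C` via `τ^[j]`
  have Tpow : ∀ (j : ℕ) (c : C), Tk ^ j * (c : A) = ((⇑τ)^[j] c : A) * Tk ^ j := by
    intro j
    induction j with
    | zero => intro c; simp
    | succ j ih =>
      intro c
      rw [pow_succ', mul_assoc, ih c, ← mul_assoc, hOre.commute,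
        Function.iterate_succ_apply', mul_assoc, ← pow_succ']
  -- the additive hom `Φ f = ∑ f i * Tk ^ i`
  set φ : ℕ → C →+ A := fun i =>
    { toFun := fun c => (c : A) * Tk ^ i
      map_zero' := by simp
      map_add' := fun x y => by push_cast; rw [add_mul] } with hφ
  set Φ : (ℕ →₀ C) →+ A := Finsupp.liftAddHom φ with hΦ
  have hΦ_apply : ∀ f : ℕ →₀ C, Φ f = f.sum fun i c => (c : A) * Tk ^ i := by
    intro f; rfl
  have hΦ_single : ∀ (i : ℕ) (c : C), Φ (Finsupp.single i c) = (c : A) * Tk ^ i := by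
    intro i c; rw [hΦ, Finsupp.liftAddHom_apply_single]; rfl
  -- the candidate ideal
  set M : Set A := {x | ∃ f : ℕ →₀ C, (∀ i, f i ∈ I) ∧ x = Φ f} with hM
  have Mzero : (0 : A) ∈ M := ⟨0, fun i => by simp [I.zero_mem], by simp⟩
  have Madd : ∀ {x y : A}, x ∈ M → y ∈ M → x + y ∈ M := by
    rintro x y ⟨f, hf, rfl⟩ ⟨g, hg, rfl⟩
    exact ⟨f + g, fun i => I.add_mem (hf i) (hg i), by rw [map_add]⟩
  have Mneg : ∀ {x : A}, x ∈ M → -x ∈ M := by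
    rintro x ⟨f, hf, rfl⟩
    exact ⟨-f, fun i => I.neg_mem (hf i), by rw [map_neg]⟩
  have Msingle : ∀ (c : C), c ∈ I → ∀ i : ℕ, (c : A) * Tk ^ i ∈ M := by
    intro c hc i
    exact ⟨Finsupp.single i c, fun j => by
      rcases eq_or_ne i j with rfl | hij
      · simpa using hc
      · simp [Finsupp.single_eq_of_ne' hij, I.zero_mem], (hΦ_single i c).symm⟩
  have Msum : ∀ (s : Finset ℕ) (F : ℕ → A), (∀ j ∈ s, F j ∈ M) → (∑ j ∈ s, F j) ∈ M := by
    intro s F hF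
    induction s using Finset.induction_on with
    | empty => simpa using Mzero
    | insert x s hx ih =>
      rw [Finset.sum_insert hx]
      exact Madd (hF _ (Finset.mem_insert_self _ _))
        (ih fun j hj => hF j (Finset.mem_insert_of_mem hj))
  have Mmul_left : ∀ {x y : A}, y ∈ M → x * y ∈ M := by
    rintro x y ⟨f, hf, rfl⟩
    obtain ⟨g, hg⟩ := hOre.exists_rep x
    rw [hΦ_apply, Finsupp.sum, Finset.mul_sum]
    refine Msum _ _ fun i _ => ?_
    rw [hg, Finsupp.sum, Finset.sum_mul]
    refine Msum _ _ fun j _ => ?_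
    have : (g j : A) * Tk ^ j * ((f i : A) * Tk ^ i)
        = ((g j * (⇑τ)^[j] (f i) : C) : A) * Tk ^ (j + i) := by
      push_cast
      rw [mul_assoc, ← mul_assoc (Tk ^ j), Tpow j (f i), pow_add]
      simp [mul_assoc]
    rw [this]
    exact Msingle _ (I.mul_mem_left _ _ (tauIn j _ (hf i))) _
  have Mmul_right : ∀ {x y : A}, x ∈ M → x * y ∈ M := by
    rintro x y ⟨f, hf, rfl⟩
    obtain ⟨g, hg⟩ := hOre.exists_rep y
    rw [hΦ_apply, Finsupp.sum, Finset.sum_mul]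
    refine Msum _ _ fun i _ => ?_
    rw [hg, Finsupp.sum, Finset.mul_sum]
    refine Msum _ _ fun j _ => ?_
    have : (f i : A) * Tk ^ i * ((g j : A) * Tk ^ j)
        = ((f i * (⇑τ)^[i] (g j) : C) : A) * Tk ^ (i + j) := by
      push_cast
      rw [mul_assoc, ← mul_assoc (Tk ^ i), Tpow i (g j), pow_add]
      simp [mul_assoc]
    rw [this]
    exact Msingle _ (I.mul_mem_right _ _ (hf i)) _
  set J : TwoSidedIdeal A := TwoSidedIdeal.mk' M Mzero Madd Mneg Mmul_left Mmul_right with hJ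
  have hmem : (a : A) * Tk ^ n ∈ J := by
    rw [TwoSidedIdeal.mem_span_iff] at h
    refine h J ?_
    intro x hx
    rcases hx with rfl
    rw [SetLike.mem_coe, hJ, TwoSidedIdeal.mem_mk']
    have h0 : ((Ts : A)) = (Ts : A) * Tk ^ 0 := by simp
    rw [h0]
    exact Msingle _ hTsI 0
  rw [hJ, TwoSidedIdeal.mem_mk'] at hmem
  obtain ⟨f, hf, hfa⟩ := hmem
  have key : Finsupp.single n a - f = 0 := by
    apply hOre.indep
    rw [← hΦ_apply, map_sub, hΦ_single, ← hfa, sub_self]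
  have : Finsupp.single n a = f := by
    rwa [sub_eq_zero] at key
  have hfn := hf n
  rw [← this, Finsupp.single_eq_same] at hfn
  exact hfn
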